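/- arXiv:2304.08000 — 2 statements merged into one kernel-verified Lean document; each statement's English description precedes it below -/
import Mathlib

section
/- Let M be a matroid and adM an adjoint of M with adjoint map φ: L(M) → L(adM). Then for every flat X of M, the rank of φ(X) in adM equals r(M) − r_M(X). -/
open Set Matroid
open scoped Matroid

namespace AdjointPaper

variable {α β γ : Type*}

/-- The rank of a set `X` in a matroid `M`: the supremum of cardinalities of
independent subsets of `X`. -/
noncomputable def mrank (M : Matroid α) (X : Set α) : ℕ :=
  sSup (Set.ncard '' {I | M.Indep I ∧ I ⊆ X})

/-- The rank of a matroid. -/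
noncomputable def mrk (M : Matroid α) : ℕ := mrank M M.E

/-- A hyperplane of `M`: a coatom of the lattice of flats. -/
def IsHyperplane (M : Matroid α) (H : Set α) : Prop :=
  M.IsFlat H ∧ H ≠ M.E ∧ ∀ F, M.IsFlat F → H ⊂ F → F = M.E

/-- An atom of the lattice of flats of `M`. -/
def IsFlatAtom (M : Matroid α) (P : Set α) : Prop :=
  M.IsFlat P ∧ M.closure ∅ ⊂ P ∧ ∀ F, M.IsFlat F → M.closure ∅ ⊂ F → F ⊆ P → F = P

/-- `e` is a loop of `M`. -/
def IsLoop (M : Matroid α) (e : α) : Prop := e ∈ M.E ∧ ¬ M.Indep {e}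

/-- `M` is loopless. -/
def Loopless (M : Matroid α) : Prop := ∀ e ∈ M.E, M.Indep {e}

/-- `M` is simple: loopless and with no two parallel elements. -/
def Simple (M : Matroid α) : Prop :=
  (∀ e ∈ M.E, M.Indep {e}) ∧
    ∀ e ∈ M.E, ∀ f ∈ M.E, M.closure {e} = M.closure {f} → e = f

/-- `φ` is an adjoint map from `M` to `N`: an injective, order-reversing map on
flats taking hyperplanes of `M` bijectively onto the atoms of `N`, with
`N` of the same rank as `M`. -/
structure IsAdjointMap (M : Matroid α) (N : Matroid β) (φ : Set α → Set β) : Prop where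
  rank_eq : mrk N = mrk M
  flat : ∀ ⦃F⦄, M.IsFlat F → N.IsFlat (φ F)
  inj : ∀ ⦃F F'⦄, M.IsFlat F → M.IsFlat F' → φ F = φ F' → F = F'
  antitone : ∀ ⦃F F'⦄, M.IsFlat F → M.IsFlat F' → F ⊆ F' → φ F' ⊆ φ F
  hyper_atom : ∀ ⦃H⦄, IsHyperplane M H → IsFlatAtom N (φ H)
  atom_surj : ∀ ⦃P⦄, IsFlatAtom N P → ∃ H, IsHyperplane M H ∧ φ H = P

/-- `N` is an adjoint of `M`. -/
def IsAdjoint (M : Matroid α) (N : Matroid β) : Prop := ∃ φ, IsAdjointMap M N φ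

/-- Isomorphism of matroids. -/
def Iso (M : Matroid α) (N : Matroid β) : Prop :=
  ∃ f : α → β, Set.BijOn f M.E N.E ∧ ∀ I ⊆ M.E, (M.Indep I ↔ N.Indep (f '' I))

/-- Connectedness: `M` has nonempty ground set and is not a direct sum of two
matroids on nonempty ground sets. -/
def Conn (M : Matroid α) : Prop :=
  M.E.Nonempty ∧ ∀ (N₁ N₂ : Matroid α) (h : Disjoint N₁.E N₂.E),
    N₁.E.Nonempty → N₂.E.Nonempty → M ≠ Matroid.disjointSum N₁ N₂ h

/-- A circuit of `M`: a minimal dependent set. -/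
def IsCircuit (M : Matroid α) (C : Set α) : Prop :=
  C ⊆ M.E ∧ ¬ M.Indep C ∧ ∀ D, D ⊂ C → M.Indep D

/-- `K` is a connected component of `M`. -/
def ConnComponent (M : Matroid α) (K : Set α) : Prop :=
  K ⊆ M.E ∧ K.Nonempty ∧ Conn (M ↾ K) ∧
    ∀ C, IsCircuit M C → C ⊆ K ∨ Disjoint C K

/-- `M` is a modular matroid: every pair of flats is a modular pair. -/
def Modular (M : Matroid α) : Prop :=
  ∀ F F', M.IsFlat F → M.IsFlat F' →
    mrank M (M.closure (F ∪ F')) + mrank M (F ∩ F') = mrank M F + mrank M F'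

/-- The lattice of flats of `N` is isomorphic to the opposite of the lattice of
flats of `M`. -/
def FlatOpIso (M : Matroid α) (N : Matroid β) : Prop :=
  ∃ ψ : Set α → Set β, (∀ F, M.IsFlat F → N.IsFlat (ψ F)) ∧
    (∀ F F', M.IsFlat F → M.IsFlat F' → (F ⊆ F' ↔ ψ F' ⊆ ψ F)) ∧
    ∀ G, N.IsFlat G → ∃ F, M.IsFlat F ∧ ψ F = G

/-- A linear subclass of `M`: a set of hyperplanes closed under the hyperplanes
through a comodular intersection of two of its members. The lattice of all
linear subclasses ordered by inclusion is the extension lattice `E(M)`. -/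
def LinearSubclass (M : Matroid α) (S : Set (Set α)) : Prop :=
  (∀ H ∈ S, IsHyperplane M H) ∧
    ∀ H₁ ∈ S, ∀ H₂ ∈ S, mrank M (H₁ ∩ H₂) = mrk M - 2 →
      ∀ H₃, IsHyperplane M H₃ → H₁ ∩ H₂ ⊆ H₃ → H₃ ∈ S

/-- `N` is (isomorphic to) the projective geometry `PG (r-1, F)`, via a
representation `f` hitting every point of the projective space exactly once. -/
def IsProjGeomRep (N : Matroid β) (r : ℕ) (F : Type*) [Field F] : Prop :=
  ∃ f : β → (Fin r → F),
    (∀ e ∈ N.E, f e ≠ 0) ∧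
    (∀ e ∈ N.E, ∀ e' ∈ N.E,
      Submodule.span F {f e} = Submodule.span F {f e'} → e = e') ∧
    (∀ v : Fin r → F, v ≠ 0 → ∃ e ∈ N.E, Submodule.span F {f e} = Submodule.span F {v}) ∧
    ∀ I, I ⊆ N.E → (N.Indep I ↔ LinearIndependent F (fun x : I => f x.1))

/-- `N` is (isomorphic to) the finite projective geometry `PG (r-1, q)`. -/
def IsProjGeom (N : Matroid β) (r q : ℕ) : Prop :=
  ∃ (F : Type) (instF : Field F) (instT : Fintype F),
    @Fintype.card F instT = q ∧ @IsProjGeomRep _ N r F instF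

/-- `M` is a projective plane: a simple rank-3 matroid in which every line has
at least three points and every two lines meet. -/
def IsProjPlane (M : Matroid α) : Prop :=
  Simple M ∧ mrk M = 3 ∧
    (∀ L, M.IsFlat L → mrank M L = 2 → 3 ≤ L.ncard) ∧
    ∀ L L', M.IsFlat L → M.IsFlat L' → mrank M L = 2 → mrank M L' = 2 → (L ∩ L').Nonempty

/-- `N` is (isomorphic to) the uniform matroid `U_{r,m}`. -/
def IsUnif (N : Matroid β) (r m : ℕ) : Prop :=
  N.E.Finite ∧ N.E.ncard = m ∧ ∀ I, I ⊆ N.E → (N.Indep I ↔ I.Finite ∧ I.ncard ≤ r)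

section RankLemmas

variable {M : Matroid α} {X Y F F' I : Set α} {e : α}

lemma mrank_bddAbove (M : Matroid α) [M.Finite] (X : Set α) :
    BddAbove (Set.ncard '' {I | M.Indep I ∧ I ⊆ X}) := by
  refine ⟨M.E.ncard, ?_⟩
  rintro n ⟨J, ⟨hJ, -⟩, rfl⟩
  exact Set.ncard_le_ncard hJ.subset_ground M.ground_finite

lemma mrank_le_of_indep [M.Finite] (hI : M.Indep I) (hIX : I ⊆ X) :
    I.ncard ≤ mrank M X :=
  le_csSup (mrank_bddAbove M X) ⟨I, ⟨hI, hIX⟩, rfl⟩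

lemma Basis_mrank [M.Finite] (hI : M.IsBasis I X) : mrank M X = I.ncard := by
  refine le_antisymm (csSup_le ⟨0, ∅, ⟨M.empty_indep, empty_subset X⟩, by simp⟩ ?_)
    (mrank_le_of_indep hI.indep hI.subset)
  rintro n ⟨J, ⟨hJ, hJX⟩, rfl⟩
  obtain ⟨K, hK, hJK⟩ := hJ.subset_isBasis_of_subset hJX hI.subset_ground
  have h1 : J.ncard ≤ K.ncard :=
    Set.ncard_le_ncard hJK (M.set_finite K hK.indep.subset_ground)
  have h2 : K.ncard = I.ncard := by
    rw [Set.ncard_def, hK.encard_eq_encard hI, ← Set.ncard_def]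
  omega

lemma mrank_mono [M.Finite] (hXY : X ⊆ Y) : mrank M X ≤ mrank M Y := by
  refine csSup_le ⟨0, ∅, ⟨M.empty_indep, empty_subset X⟩, by simp⟩ ?_
  rintro n ⟨J, ⟨hJ, hJX⟩, rfl⟩
  exact mrank_le_of_indep hJ (hJX.trans hXY)

lemma mrank_le_mrk [M.Finite] (hX : X ⊆ M.E) : mrank M X ≤ mrk M :=
  mrank_mono hX

lemma closure_flat' (M : Matroid α) (X : Set α) : M.IsFlat (M.closure X) := by
  rw [Matroid.closure_def, sInter_eq_iInter]
  have : Nonempty {F // F ∈ {F | M.IsFlat F ∧ X ∩ M.E ⊆ F}} :=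
    ⟨⟨M.E, M.ground_isFlat, inter_subset_right⟩⟩
  exact Matroid.IsFlat.iInter fun F ↦ F.2.1

lemma flat_mrank_lt [M.Finite] (hF : M.IsFlat F) (hF' : M.IsFlat F') (hss : F ⊂ F') :
    mrank M F < mrank M F' := by
  obtain ⟨e, heF', heF⟩ := exists_of_ssubset hss
  obtain ⟨I, hI⟩ := M.exists_isBasis F hF.subset_ground
  have heI : e ∉ I := fun h ↦ heF (hI.subset h)
  have hcl : M.closure I = F := by rw [hI.closure_eq_closure, hF.closure]
  have hins : M.Indep (insert e I) := by
    rw [hI.indep.insert_indep_iff_of_notMem heI, hcl]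
    exact ⟨hF'.subset_ground heF', heF⟩
  have hIfin : I.Finite := M.set_finite I hI.indep.subset_ground
  have hle := mrank_le_of_indep hins (insert_subset heF' (hI.subset.trans hss.subset))
  rw [Set.ncard_insert_of_notMem heI hIfin] at hle
  rw [Basis_mrank hI]
  omega

lemma exists_cover_flat [M.Finite] (hX : M.IsFlat X) (hlt : mrank M X < mrk M) :
    ∃ F, M.IsFlat F ∧ X ⊂ F ∧ mrank M F = mrank M X + 1 := by
  have hXE : X ≠ M.E := by rintro rfl; exact hlt.ne rfl
  obtain ⟨e, heE, heX⟩ := exists_of_ssubset (hX.subset_ground.ssubset_of_ne hXE)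
  obtain ⟨I, hI⟩ := M.exists_isBasis X hX.subset_ground
  have heI : e ∉ I := fun h ↦ heX (hI.subset h)
  have hcl : M.closure I = X := by rw [hI.closure_eq_closure, hX.closure]
  have hins : M.Indep (insert e I) := by
    rw [hI.indep.insert_indep_iff_of_notMem heI, hcl]; exact ⟨heE, heX⟩
  have hbas : M.IsBasis (insert e I) (insert e X) := hI.insert_isBasis_insert hins
  have hsub : X ⊆ M.closure (insert e X) :=
    (subset_insert e X).trans (M.subset_closure _ (insert_subset heE hX.subset_ground))
  refine ⟨M.closure (insert e X), closure_flat' M _, hsub.ssubset_of_ne ?_, ?_⟩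
  · intro h
    exact heX (h ▸ (M.subset_closure _ (insert_subset heE hX.subset_ground)) (mem_insert e X))
  · rw [Basis_mrank hbas.isBasis_closure_right, Basis_mrank hI,
      Set.ncard_insert_of_notMem heI (M.set_finite I hI.indep.subset_ground)]

lemma exists_sub_flat [M.Finite] {k : ℕ} (hX : M.IsFlat X) (hrk : mrank M X = k + 1) :
    ∃ Y, M.IsFlat Y ∧ Y ⊂ X ∧ mrank M Y = k := by
  obtain ⟨I, hI⟩ := M.exists_isBasis X hX.subset_ground
  have hIfin : I.Finite := M.set_finite I hI.indep.subset_ground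
  have hIcard : I.ncard = k + 1 := by rw [← Basis_mrank hI, hrk]
  have hne : I.Nonempty := by
    rw [Set.nonempty_iff_ne_empty]; rintro rfl; simp at hIcard
  obtain ⟨e, heI⟩ := hne
  have hJindep : M.Indep (I \ {e}) := hI.indep.subset diff_subset
  have hJcard : (I \ {e}).ncard = k := by
    rw [Set.ncard_diff_singleton_of_mem heI, hIcard]; omega
  have hrky : mrank M (M.closure (I \ {e})) = k := by
    rw [Basis_mrank hJindep.isBasis_closure, hJcard]
  have hsub : M.closure (I \ {e}) ⊆ X := by
    calc M.closure (I \ {e}) ⊆ M.closure I := M.closure_subset_closure diff_subset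
    _ = X := by rw [hI.closure_eq_closure, hX.closure]
  refine ⟨M.closure (I \ {e}), closure_flat' M _, hsub.ssubset_of_ne ?_, hrky⟩
  intro h
  rw [h, hrk] at hrky
  omega

end RankLemmas

/-- for an adjoint map `φ` and every flat `X` of `M`, the rank of
`φ X` in the adjoint equals `r(M) - r_M(X)`. -/
theorem statement_0 {M : Matroid α} {N : Matroid β} [M.Finite] [N.Finite]
    {φ : Set α → Set β} (hφ : IsAdjointMap M N φ) {X : Set α} (hX : M.IsFlat X) :
    mrank N (φ X) = mrk M - mrank M X := by
  obtain ⟨hrkeq, hflat, hinj, hanti, -, -⟩ := hφ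
  have claim2 : ∀ k : ℕ, ∀ Z : Set α, M.IsFlat Z → mrank M Z = k →
      mrank N (φ Z) + k ≤ mrk N := by
    intro k
    induction k with
    | zero => intro Z hZ _; simpa using mrank_le_mrk (hflat hZ).subset_ground
    | succ k ih =>
      intro Z hZ hrk
      obtain ⟨Y, hY, hss, hrY⟩ := exists_sub_flat hZ hrk
      have h1 := ih Y hY hrY
      have h2 : mrank N (φ Z) < mrank N (φ Y) := by
        refine flat_mrank_lt (hflat hZ) (hflat hY)
          ((hanti hY hZ hss.subset).ssubset_of_ne ?_)
        intro h
        exact hss.ne' (hinj hZ hY h)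
      omega
  have claim1 : ∀ n : ℕ, ∀ Z : Set α, M.IsFlat Z → mrk M - mrank M Z ≤ n →
      mrk M ≤ mrank N (φ Z) + mrank M Z := by
    intro n
    induction n with
    | zero =>
      intro Z hZ h0
      have := mrank_le_mrk (M := M) hZ.subset_ground
      omega
    | succ n ih =>
      intro Z hZ h
      rcases lt_or_ge (mrank M Z) (mrk M) with hlt | hge
      · obtain ⟨F, hF, hss, hrF⟩ := exists_cover_flat hZ hlt
        have h1 := ih F hF (by omega)
        have h2 : mrank N (φ F) < mrank N (φ Z) := by
          refine flat_mrank_lt (hflat hF) (hflat hZ)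
            ((hanti hZ hF hss.subset).ssubset_of_ne ?_)
          intro h'
          exact hss.ne' (hinj hF hZ h')
        omega
      · omega
  have h1 := claim1 (mrk M) X hX (Nat.sub_le _ _)
  have h2 := claim2 (mrank M X) X hX rfl
  have h3 := mrank_le_mrk (M := M) hX.subset_ground
  rw [hrkeq] at h2
  omega

end AdjointPaper
end

section
/- Let M be a matroid of rank r and adM an adjoint of M with ground set C(M*) (the set of cocircuits of M), so that C*[e] = {C* : e ∉ C*} is a hyperplane of adM for each non-loop e. If B is a basis of M, then the set of fundamental cocircuits {C*(e;B) : e ∈ B} is a basis of adM. -/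
open Set Matroid
open scoped Matroid

namespace AdjointPaper

variable {α β γ : Type*}

/-- Any proper subset of `M.E \ M.closure (B \ {e})` (for `B` a base and `e ∈ B`)
is independent in the dual, and the set itself is dependent: it is a cocircuit. -/
lemma fundCocircuit_isCircuit {M : Matroid α} {B : Set α} (hB : M.IsBase B) {e : α}
    (heB : e ∈ B) : IsCircuit M✶ (M.E \ M.closure (B \ {e})) := by
  set C := M.E \ M.closure (B \ {e}) with hC
  have hBE : B ⊆ M.E := hB.subset_ground
  have heE : e ∈ M.E := hBE heB
  have hecl : e ∉ M.closure (B \ {e}) := hB.indep.notMem_closure_diff_of_mem heB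
  have hCE : C ⊆ M.E := diff_subset
  have hdisj : Disjoint (B \ {e}) C := by
    refine disjoint_left.mpr fun x hx hxC => hxC.2 ?_
    exact M.subset_closure (B \ {e}) (diff_subset.trans hBE) hx
  refine ⟨hCE, ?_, ?_⟩
  · intro hind
    obtain ⟨-, B', hB', hdis⟩ := dual_indep_iff_exists'.mp hind
    have hB'cl : B' ⊆ M.closure (B \ {e}) := by
      intro x hxB'
      by_contra hxcl
      exact (disjoint_left.mp hdis ⟨hB'.subset_ground hxB', hxcl⟩) hxB'
    have : M.E ⊆ M.closure (B \ {e}) := by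
      have h1 := M.closure_subset_closure_of_subset_closure hB'cl
      rw [hB'.closure_eq] at h1
      exact h1
    exact hecl (this heE)
  · intro D hD
    obtain ⟨x, hxC, hxD⟩ := exists_of_ssubset hD
    have hxE : x ∈ M.E := hxC.1
    have hxcl : x ∉ M.closure (B \ {e}) := hxC.2
    have hind : M.Indep (insert x (B \ {e})) := by
      rw [(hB.indep.diff {e}).insert_indep_iff]
      exact Or.inl ⟨hxE, hxcl⟩
    have hbase : M.IsBase (insert x (B \ {e})) := by
      by_cases hxB : x ∈ B
      · have hxe : x = e := by
          by_contra hne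
          exact hxcl (M.subset_closure (B \ {e}) (diff_subset.trans hBE) ⟨hxB, hne⟩)
        rw [hxe, insert_diff_singleton, insert_eq_self.mpr heB]
        exact hB
      · exact hB.exchange_isBase_of_indep hxB hind
    refine dual_indep_iff_exists'.mpr ⟨hD.subset.trans hCE, insert x (B \ {e}), hbase, ?_⟩
    refine disjoint_right.mpr fun y hy hyD => ?_
    rcases hy with rfl | hy
    · exact hxD hyD
    · exact (disjoint_left.mp hdisj hy) (hD.subset hyD)

/-- In a finite matroid, every base has cardinality `mrk M`. -/
lemma base_ncard_eq_mrk {M : Matroid α} [M.Finite] {B : Set α} (hB : M.IsBase B) :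
    B.ncard = mrk M := by
  refine le_antisymm ?_ ?_
  · refine le_csSup ⟨M.E.ncard, ?_⟩ ⟨B, ⟨hB.indep, hB.subset_ground⟩, rfl⟩
    rintro n ⟨I, ⟨hI, hIE⟩, rfl⟩
    exact Set.ncard_le_ncard hIE M.ground_finite
  · refine csSup_le ⟨B.ncard, ⟨B, ⟨hB.indep, hB.subset_ground⟩, rfl⟩⟩ ?_
    rintro n ⟨I, ⟨hI, hIE⟩, rfl⟩
    obtain ⟨B', hB', hIB'⟩ := hI.exists_isBase_superset
    calc I.ncard ≤ B'.ncard := Set.ncard_le_ncard hIB' (M.set_finite B' hB'.subset_ground)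
    _ = B.ncard := hB'.ncard_eq_ncard_of_isBase hB

/-- the fundamental cocircuits of a basis of `M` form a basis of
an adjoint realized on the cocircuit ground set. -/
theorem statement_18 {M : Matroid α} {N : Matroid (Set α)} [M.Finite] [N.Finite]
    {r : ℕ} (hrM : mrk M = r) (hrN : mrk N = r)
    (hE : N.E = {C | IsCircuit M✶ C})
    (hHyp : ∀ e ∈ M.E, ¬ IsLoop M e →
      IsHyperplane N {C | IsCircuit M✶ C ∧ e ∉ C})
    {B : Set α} (hB : M.IsBase B) :
    N.IsBase ((fun e => M.E \ M.closure (B \ {e})) '' B) := by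
  set φ : α → Set α := fun e => M.E \ M.closure (B \ {e}) with hφ
  set X := φ '' B with hX
  have hBE : B ⊆ M.E := hB.subset_ground
  -- each fundamental cocircuit contains its element
  have hmem : ∀ e ∈ B, e ∈ φ e := fun e he =>
    ⟨hBE he, hB.indep.notMem_closure_diff_of_mem he⟩
  -- distinct elements are excluded
  have hnotmem : ∀ e ∈ B, ∀ f ∈ B, e ≠ f → e ∉ φ f := by
    intro e he f hf hef hmem'
    exact hmem'.2 (M.subset_closure (B \ {f}) (diff_subset.trans hBE) ⟨he, hef⟩)
  have hinj : Set.InjOn φ B := by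
    intro e he f hf hEq
    by_contra hne
    exact hnotmem e he f hf hne (hEq ▸ hmem e he)
  have hXE : X ⊆ N.E := by
    rintro _ ⟨e, he, rfl⟩
    rw [hE]
    exact fundCocircuit_isCircuit hB he
  -- X is independent in N
  have hXind : N.Indep X := by
    rw [indep_iff_forall_notMem_closure_diff hXE]
    rintro _ ⟨e, he, rfl⟩ hcl
    have heE : e ∈ M.E := hBE he
    have hloop : ¬ IsLoop M e := fun h => h.2 (hB.indep.subset (by simpa using he))
    have hHe := hHyp e heE hloop
    have hflat : N.IsFlat {C | IsCircuit M✶ C ∧ e ∉ C} := hHe.1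
    have hsub : X \ {φ e} ⊆ {C | IsCircuit M✶ C ∧ e ∉ C} := by
      rintro _ ⟨⟨f, hf, rfl⟩, hne⟩
      refine ⟨fundCocircuit_isCircuit hB hf, ?_⟩
      refine hnotmem e he f hf (fun h => hne ?_) 
      exact h ▸ rfl
    have : φ e ∈ {C | IsCircuit M✶ C ∧ e ∉ C} := by
      rw [mem_closure_iff_forall_mem_isFlat _ ((diff_subset).trans hXE)] at hcl
      exact hcl _ hflat hsub
    exact this.2 (hmem e he)
  -- cardinality
  have hXcard : X.ncard = r := by
    rw [hX, Set.ncard_image_of_injOn hinj, base_ncard_eq_mrk hB, hrM]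
  obtain ⟨B₂, hB₂, hXB₂⟩ := hXind.exists_isBase_superset
  have hB₂card : B₂.ncard = r := by rw [base_ncard_eq_mrk hB₂, hrN]
  have : X = B₂ :=
    Set.eq_of_subset_of_ncard_le hXB₂ (by rw [hB₂card, hXcard]) (N.set_finite B₂ hB₂.subset_ground)
  rw [this]
  exact hB₂

end AdjointPaper
end
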